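/- Let R be a G-graded ring which is graded left injective. Then for any two graded left ideals U and V of R, one has ann_r(U) + ann_r(V) = ann_r(U ∩ V). -/

import Mathlib

open DirectSum

universe u v w

variable {G : Type u} [Group G] [DecidableEq G]
variable {R : Type v} [Ring R]

/-- `𝒜` is a `G`-grading of the ring `R`: homogeneous components are additive
subgroups, `1` is homogeneous of trivial degree, multiplication respects degrees,
and `R` is the internal direct sum of the components. -/
def IsGRing (𝒜 : G → AddSubgroup R) : Prop :=
  (1 : R) ∈ 𝒜 1 ∧
  (∀ (g h : G) (a b : R), a ∈ 𝒜 g → b ∈ 𝒜 h → a * b ∈ 𝒜 (g * h)) ∧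
  DirectSum.IsInternal 𝒜

/-- A left ideal is graded when it is spanned by its homogeneous elements. -/
def IsGradedLeftIdeal (𝒜 : G → AddSubgroup R) (I : Submodule R R) : Prop :=
  I = Submodule.span R ((I : Set R) ∩ ⋃ g, (𝒜 g : Set R))

/-- A minimal graded left ideal (a graded-simple graded left submodule of `R`). -/
def IsMinGradedLeftIdeal (𝒜 : G → AddSubgroup R) (S : Submodule R R) : Prop :=
  IsGradedLeftIdeal 𝒜 S ∧ S ≠ ⊥ ∧
    ∀ T : Submodule R R, T ≤ S → IsGradedLeftIdeal 𝒜 T → T = ⊥ ∨ T = S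

/-- A maximal graded left ideal. -/
def IsMaxGradedLeftIdeal (𝒜 : G → AddSubgroup R) (I : Submodule R R) : Prop :=
  IsGradedLeftIdeal 𝒜 I ∧ I ≠ ⊤ ∧
    ∀ J : Submodule R R, IsGradedLeftIdeal 𝒜 J → I < J → J = ⊤

/-- The graded Jacobson radical: intersection of all maximal graded left ideals. -/
def grJacobson (𝒜 : G → AddSubgroup R) : Submodule R R :=
  sInf {I : Submodule R R | IsMaxGradedLeftIdeal 𝒜 I}

/-- Left annihilator of a subset of `R`. -/
def annLset (X : Set R) : Set R := {r : R | ∀ x ∈ X, r * x = 0}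

/-- Right annihilator of a subset of `R`. -/
def annRset (X : Set R) : Set R := {r : R | ∀ x ∈ X, x * r = 0}

/-- Left annihilator of an element, as a left ideal. -/
def annLIdeal (x : R) : Submodule R R where
  carrier := {r : R | r * x = 0}
  add_mem' := by
    intro a b ha hb
    simp only [Set.mem_setOf_eq] at *
    rw [add_mul, ha, hb, add_zero]
  zero_mem' := by simp
  smul_mem' := by
    intro c a ha
    simp only [Set.mem_setOf_eq, smul_eq_mul] at *
    rw [mul_assoc, ha, mul_zero]

/-- A left ideal is essential if it meets every nonzero left ideal nontrivially. -/
def IsEssentialLeftIdeal (I : Submodule R R) : Prop :=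
  ∀ J : Submodule R R, J ≠ ⊥ → I ⊓ J ≠ ⊥

/-- Homogeneous part of degree `g` of the graded singular ideal. -/
def grSingSet (𝒜 : G → AddSubgroup R) (g : G) : Set R :=
  {x : R | x ∈ 𝒜 g ∧ IsEssentialLeftIdeal (annLIdeal x)}

/-- The graded singular ideal `Z^gr(R) = ⊕_g Z^gr(R)_g`. -/
def grSing (𝒜 : G → AddSubgroup R) : AddSubgroup R :=
  AddSubgroup.closure (⋃ g, grSingSet 𝒜 g)

/-- `R` is graded left self-injective (graded Baer criterion): every morphism of
degree `σ` from a graded left ideal to `R` is right multiplication by an element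
of degree `σ`. -/
def GrLeftSelfInjective (𝒜 : G → AddSubgroup R) : Prop :=
  ∀ I : Submodule R R, IsGradedLeftIdeal 𝒜 I → ∀ σ : G, ∀ f : I →ₗ[R] R,
    (∀ (g : G) (x : I), (x : R) ∈ 𝒜 g → f x ∈ 𝒜 (g * σ)) →
    ∃ m ∈ 𝒜 σ, ∀ x : I, f x = (x : R) * m

/-- Ascending chain condition on graded left ideals. -/
def GrLeftNoetherian (𝒜 : G → AddSubgroup R) : Prop :=
  ∀ f : ℕ → Submodule R R, (∀ n, IsGradedLeftIdeal 𝒜 (f n)) → Monotone f →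
    ∃ n, ∀ m, n ≤ m → f m = f n

/-- Descending chain condition on graded left ideals. -/
def GrLeftArtinian (𝒜 : G → AddSubgroup R) : Prop :=
  ∀ f : ℕ → Submodule R R, (∀ n, IsGradedLeftIdeal 𝒜 (f n)) → Antitone f →
    ∃ n, ∀ m, n ≤ m → f m = f n

/-- Graded von Neumann regularity. -/
def GrVNRegular (𝒜 : G → AddSubgroup R) : Prop :=
  ∀ (g : G) (a : R), a ∈ 𝒜 g → ∃ b : R, a = a * b * a

/-- Graded semisimplicity: `R` is the sum of its minimal graded left ideals. -/
def GrSemisimple (𝒜 : G → AddSubgroup R) : Prop :=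
  sSup {S : Submodule R R | IsMinGradedLeftIdeal 𝒜 S} = (⊤ : Submodule R R)

/-- `ℳ` is a `G`-grading of the left `R`-module `M`, compatible with `𝒜`. -/
def IsGModule (𝒜 : G → AddSubgroup R) {M : Type w} [AddCommGroup M] [Module R M]
    (ℳ : G → AddSubgroup M) : Prop :=
  (∀ (g h : G) (a : R) (m : M), a ∈ 𝒜 g → m ∈ ℳ h → a • m ∈ ℳ (g * h)) ∧
  DirectSum.IsInternal ℳ

/-- A submodule is graded when it is spanned by its homogeneous elements. -/
def IsGradedSubmodule {M : Type w} [AddCommGroup M] [Module R M]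
    (ℳ : G → AddSubgroup M) (N : Submodule R M) : Prop :=
  N = Submodule.span R ((N : Set M) ∩ ⋃ g, (ℳ g : Set M))

open Pointwise in
/-- if `R` is graded left self-injective, then for graded left
ideals `U, V` one has `ann_r(U) + ann_r(V) = ann_r(U ∩ V)` (pointwise sum). -/
theorem annR_add_annR_eq_annR_inf
    (𝒜 : G → AddSubgroup R) (h𝒜 : IsGRing 𝒜) (hinj : GrLeftSelfInjective 𝒜)
    (U V : Submodule R R) (hU : IsGradedLeftIdeal 𝒜 U) (hV : IsGradedLeftIdeal 𝒜 V) :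
    annRset ((U ⊓ V : Submodule R R) : Set R) =
      annRset (U : Set R) + annRset (V : Set R) := by
  classical
  obtain ⟨hone, hmul, hint⟩ := h𝒜
  let e : (⨁ g, 𝒜 g) ≃+ R := AddEquiv.ofBijective (DirectSum.coeAddMonoidHom 𝒜) hint
  have he : ∀ y, e y = DirectSum.coeAddMonoidHom 𝒜 y := fun _ => rfl
  let π : G → R →+ R := fun g =>
    ((𝒜 g).subtype.comp ((DFinsupp.evalAddMonoidHom g).comp e.symm.toAddMonoidHom))
  have hπ : ∀ (g : G) (x : R), π g x = ((e.symm x) g : R) := fun _ _ => rfl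
  have hπmem : ∀ (g : G) (x : R), π g x ∈ 𝒜 g := fun g x => ((e.symm x) g).2
  have hof : ∀ (g : G) (b : 𝒜 g), e (DirectSum.of (fun i => (𝒜 i : AddSubgroup R)) g b) = (b : R) := by
    intro g b; rw [he]; exact DirectSum.coeAddMonoidHom_of 𝒜 g b
  have hsum : ∀ x : R, x = ∑ g ∈ (e.symm x).support, π g x := by
    intro x
    conv_lhs => rw [← e.apply_symm_apply x,
      ← DirectSum.sum_support_of (e.symm x)]
    rw [map_sum]
    exact Finset.sum_congr rfl fun g _ => hof g _
  have hhom : ∀ (g : G) (a : R), a ∈ 𝒜 g → ∀ g' : G, π g' a = if g' = g then a else 0 := by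
    intro g a ha g'
    have hsymm : e.symm a = DirectSum.of (fun i => ((𝒜 i : AddSubgroup R) : Type _)) g ⟨a, ha⟩ := by
      apply e.injective; rw [e.apply_symm_apply, hof]
    rw [hπ, hsymm]
    by_cases h : g' = g
    · subst h; rw [DirectSum.of_eq_same, if_pos rfl]
    · rw [DirectSum.of_eq_of_ne _ _ _ h, if_neg h, ZeroMemClass.coe_zero]
  have hshift : ∀ (g τ : G) (a x : R), a ∈ 𝒜 g → π (g * τ) (a * x) = a * π τ x := by
    intro g τ a x ha
    let mh : ∀ i : G, (𝒜 i : AddSubgroup R) →+ (𝒜 (g * i) : AddSubgroup R) := fun i =>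
      { toFun := fun b => ⟨a * (b : R), hmul g i a b ha b.2⟩
        map_zero' := by ext; simp
        map_add' := by intro b c; ext; simp [mul_add] }
    let D : (⨁ i, 𝒜 i) →+ (⨁ i, 𝒜 i) :=
      DirectSum.toAddMonoid fun i =>
        (DirectSum.of (fun j => ((𝒜 j : AddSubgroup R) : Type _)) (g * i)).comp (mh i)
    have hDof : ∀ (i : G) (b : (𝒜 i : AddSubgroup R)),
        D (DirectSum.of (fun j => ((𝒜 j : AddSubgroup R) : Type _)) i b) =
          DirectSum.of (fun j => ((𝒜 j : AddSubgroup R) : Type _)) (g * i) (mh i b) := by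
      intro i b
      simp only [D]
      rw [DirectSum.toAddMonoid_of]
      rfl
    have hD1 : ∀ y, e (D y) = a * e y := by
      intro y
      refine DirectSum.induction_on y ?_ ?_ ?_
      · simp
      · intro i b
        rw [hDof, hof, hof]
        rfl
      · intro x y hx hy; rw [map_add, map_add, map_add, hx, hy, mul_add]
    have hD2 : ∀ y, ((D y (g * τ)) : R) = a * ((y τ) : R) := by
      intro y
      refine DirectSum.induction_on y ?_ ?_ ?_
      · simp
      · intro i b
        rw [hDof]
        by_cases h : i = τ
        · subst h; rw [DirectSum.of_eq_same, DirectSum.of_eq_same]; rfl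
        · rw [DirectSum.of_eq_of_ne _ _ _ (fun hc => h (mul_left_cancel hc).symm),
            DirectSum.of_eq_of_ne _ _ _ (Ne.symm h), ZeroMemClass.coe_zero, ZeroMemClass.coe_zero,
            mul_zero]
      · intro x y hx hy
        rw [map_add, DirectSum.add_apply, DirectSum.add_apply, AddMemClass.coe_add,
          AddMemClass.coe_add, hx, hy, mul_add]
    have hsymm : e.symm (a * x) = D (e.symm x) := by
      apply e.injective; rw [e.apply_symm_apply, hD1, e.apply_symm_apply]
    rw [hπ, hsymm, hD2, ← hπ]
  have hcomp : ∀ (W : Submodule R R), IsGradedLeftIdeal 𝒜 W →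
      ∀ x ∈ W, ∀ g : G, π g x ∈ W := by
    intro W hW x hx
    rw [hW] at hx
    refine Submodule.span_induction (p := fun x _ => ∀ g : G, π g x ∈ W) ?_ ?_ ?_ ?_ hx
    · rintro s ⟨hsW, hsh⟩ g
      obtain ⟨_, ⟨h, rfl⟩, hsh⟩ := hsh
      rw [hhom h s hsh g]
      split_ifs
      · exact hsW
      · exact W.zero_mem
    · intro g; rw [map_zero]; exact W.zero_mem
    · intro x y _ _ ihx ihy g; rw [map_add]; exact W.add_mem (ihx g) (ihy g)
    · intro a x _ ih g
      have hax : a • x = ∑ h ∈ (e.symm a).support, π h a * x := by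
        rw [smul_eq_mul, ← Finset.sum_mul, ← hsum a]
      rw [hax, map_sum]
      refine Submodule.sum_mem W ?_
      intro h _
      have hs := hshift h (h⁻¹ * g) (π h a) x (hπmem h a)
      rw [mul_inv_cancel_left] at hs
      rw [hs]
      exact W.smul_mem (π h a) (ih (h⁻¹ * g))
  have hsup : IsGradedLeftIdeal 𝒜 (U ⊔ V) := by
    refine le_antisymm (sup_le ?_ ?_) (Submodule.span_le.mpr Set.inter_subset_left)
    · conv_lhs => rw [hU]
      exact Submodule.span_mono
        (Set.inter_subset_inter (fun x hx => (le_sup_left : U ≤ U ⊔ V) hx) le_rfl)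
    · conv_lhs => rw [hV]
      exact Submodule.span_mono
        (Set.inter_subset_inter (fun x hx => (le_sup_right : V ≤ U ⊔ V) hx) le_rfl)
  ext r
  constructor
  · intro hr
    have hstep : ∀ σ : G, ∃ a b : R,
        a ∈ annRset (U : Set R) ∧ b ∈ annRset (V : Set R) ∧ π σ r = a + b := by
      intro σ
      set s : R := π σ r with hs
      have hsmem : s ∈ 𝒜 σ := hπmem σ r
      -- every element of U ⊓ V kills s
      have hB : ∀ w : R, w ∈ U → w ∈ V → w * s = 0 := by
        intro w hwU hwV
        have hw : w * s = ∑ g ∈ (e.symm w).support, π g w * s := by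
          rw [← Finset.sum_mul, ← hsum w]
        rw [hw]
        refine Finset.sum_eq_zero ?_
        intro g _
        have h1 : π g w ∈ U ⊓ V :=
          Submodule.mem_inf.mpr ⟨hcomp U hU w hwU g, hcomp V hV w hwV g⟩
        have h2 : π g w * r = 0 := hr (π g w) h1
        have h3 := hshift g σ (π g w) r (hπmem g w)
        rw [h2, map_zero] at h3
        exact h3.symm
      have hdec : ∀ x : ↥(U ⊔ V), ∃ p : R × R, p.1 ∈ U ∧ p.2 ∈ V ∧ p.1 + p.2 = (x : R) := by
        intro x
        obtain ⟨y, hy, z, hz, hyz⟩ := Submodule.mem_sup.mp x.2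
        exact ⟨(y, z), hy, hz, hyz⟩
      let c : ↥(U ⊔ V) → R × R := fun x => Classical.choose (hdec x)
      have hc : ∀ x : ↥(U ⊔ V), (c x).1 ∈ U ∧ (c x).2 ∈ V ∧ (c x).1 + (c x).2 = (x : R) :=
        fun x => Classical.choose_spec (hdec x)
      have hwd : ∀ (y z : R), y ∈ U → z ∈ V → ∀ x : ↥(U ⊔ V), (x : R) = y + z →
          (c x).1 * s = y * s := by
        intro y z hy hz x hx
        have h1 : (c x).1 - y ∈ U := sub_mem (hc x).1 hy
        have h2 : (c x).1 - y ∈ V := by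
          have heq : (c x).1 - y = z - (c x).2 := by
            have h4 := (hc x).2.2
            rw [hx] at h4
            rw [sub_eq_sub_iff_add_eq_add, h4, add_comm]
          rw [heq]
          exact sub_mem hz (hc x).2.1
        have h3 := hB _ h1 h2
        rw [sub_mul] at h3
        exact sub_eq_zero.mp h3
      let f : ↥(U ⊔ V) →ₗ[R] R :=
        { toFun := fun x => (c x).1 * s
          map_add' := by
            intro x y
            have hxy : ((x + y : ↥(U ⊔ V)) : R) = ((c x).1 + (c y).1) + ((c x).2 + (c y).2) := by
              have hx := (hc x).2.2
              have hy := (hc y).2.2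
              push_cast
              rw [← hx, ← hy]
              abel
            show (c (x + y)).1 * s = (c x).1 * s + (c y).1 * s
            rw [hwd _ _ (add_mem (hc x).1 (hc y).1) (add_mem (hc x).2.1 (hc y).2.1) (x + y) hxy,
              add_mul]
          map_smul' := by
            intro a x
            have hax : ((a • x : ↥(U ⊔ V)) : R) = a * (c x).1 + a * (c x).2 := by
              have hx := (hc x).2.2
              rw [Submodule.coe_smul, smul_eq_mul, ← mul_add, hx]
            show (c (a • x)).1 * s = a • ((c x).1 * s)
            rw [hwd _ _ (U.smul_mem a (hc x).1) (V.smul_mem a (hc x).2.1) (a • x) hax]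
            simp [mul_assoc] }
      have hdeg : ∀ (g : G) (x : ↥(U ⊔ V)), (x : R) ∈ 𝒜 g → f x ∈ 𝒜 (g * σ) := by
        intro g x hxg
        have hx1 : π g (c x).1 ∈ U := hcomp U hU _ (hc x).1 g
        have hx2 : π g (c x).2 ∈ V := hcomp V hV _ (hc x).2.1 g
        have hxeq : (x : R) = π g (c x).1 + π g (c x).2 := by
          rw [← map_add, (hc x).2.2, hhom g (x : R) hxg g, if_pos rfl]
        have hfx : f x = π g (c x).1 * s := hwd _ _ hx1 hx2 x hxeq
        rw [hfx]
        exact hmul g σ _ s (hπmem g (c x).1) hsmem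
      obtain ⟨m, hmσ, hfm⟩ := hinj (U ⊔ V) hsup σ f hdeg
      refine ⟨s - m, m, ?_, ?_, (sub_add_cancel s m).symm⟩
      · intro u hu
        have huU : u ∈ U := hu
        have h1 : f ⟨u, (le_sup_left : U ≤ U ⊔ V) huU⟩ = u * s :=
          hwd u 0 huU V.zero_mem _ (by simp)
        have h2 : f ⟨u, (le_sup_left : U ≤ U ⊔ V) huU⟩ = u * m := hfm _
        rw [mul_sub, ← h1, h2, sub_self]
      · intro v hv
        have hvV : v ∈ V := hv
        have h1 : f ⟨v, (le_sup_right : V ≤ U ⊔ V) hvV⟩ = 0 * s :=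
          hwd 0 v U.zero_mem hvV _ (by simp)
        have h2 : f ⟨v, (le_sup_right : V ≤ U ⊔ V) hvV⟩ = v * m := hfm _
        rw [← h2, h1, zero_mul]
    choose A B hA hB hAB using hstep
    refine Set.mem_add.mpr ⟨∑ σ ∈ (e.symm r).support, A σ, ?_,
      ∑ σ ∈ (e.symm r).support, B σ, ?_, ?_⟩
    · intro u hu
      rw [Finset.mul_sum]
      exact Finset.sum_eq_zero fun σ _ => hA σ u hu
    · intro v hv
      rw [Finset.mul_sum]
      exact Finset.sum_eq_zero fun σ _ => hB σ v hv
    · rw [← Finset.sum_add_distrib]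
      conv_rhs => rw [hsum r]
      exact Finset.sum_congr rfl fun σ _ => (hAB σ).symm
  · intro hr
    obtain ⟨a, ha, b, hb, rfl⟩ := Set.mem_add.mp hr
    intro x hx
    have hx' : x ∈ U ⊓ V := hx
    rw [mul_add, ha x (Submodule.mem_inf.mp hx').1, hb x (Submodule.mem_inf.mp hx').2,
      add_zero]
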